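/- Let A be an invertible symmetric n₁×n₁ real matrix, C an invertible symmetric n₂×n₂ real matrix, B a g×n₁ real matrix and D a g×n₂ real matrix. Consider the (n₁+g+g+n₂)×(n₁+g+g+n₂) block matrix M = [[A, Bᵀ, 0, 0],[B, B·A⁻¹·Bᵀ, -I, 0],[0, -I, D·C⁻¹·Dᵀ, D],[0, 0, Dᵀ, C]]. Then det M = (-1)^g · det A · det C. -/

import Mathlib

open Matrix

lemma det_antidiag_neg_one (g : ℕ) :
    (Matrix.fromBlocks (0 : Matrix (Fin g) (Fin g) ℝ) (-1 : Matrix (Fin g) (Fin g) ℝ)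
      (-1 : Matrix (Fin g) (Fin g) ℝ) (0 : Matrix (Fin g) (Fin g) ℝ)).det = (-1) ^ g := by
  have h : (Matrix.fromBlocks (0 : Matrix (Fin g) (Fin g) ℝ) (-1 : Matrix (Fin g) (Fin g) ℝ)
        (-1 : Matrix (Fin g) (Fin g) ℝ) (0 : Matrix (Fin g) (Fin g) ℝ))
      = Matrix.fromBlocks (-1 : Matrix (Fin g) (Fin g) ℝ) 0 0 (1 : Matrix (Fin g) (Fin g) ℝ) *
        (Matrix.fromBlocks (1 : Matrix (Fin g) (Fin g) ℝ) 1 0 1 *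
          Matrix.fromBlocks (1 : Matrix (Fin g) (Fin g) ℝ) 0 (-1) 1 *
          Matrix.fromBlocks (1 : Matrix (Fin g) (Fin g) ℝ) 1 0 1) := by
    simp [Matrix.fromBlocks_multiply]
  rw [h, det_mul, det_mul, det_mul]
  simp [det_fromBlocks_zero₂₁, det_fromBlocks_zero₁₂, Matrix.det_neg]

/-- The determinant formula (3.6) of Proposition 3.8 ([CL, Proposition 13]):
`det [[A, Bᵀ, 0, 0], [B, B·A⁻¹·Bᵀ, -I, 0], [0, -I, D·C⁻¹·Dᵀ, D], [0, 0, Dᵀ, C]]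
  = (-1)^g · det A · det C`. -/
theorem det_glued_linking_matrix (n₁ n₂ g : ℕ)
    (A : Matrix (Fin n₁) (Fin n₁) ℝ) (hA : A.IsSymm) (hAinv : IsUnit A.det)
    (C : Matrix (Fin n₂) (Fin n₂) ℝ) (hC : C.IsSymm) (hCinv : IsUnit C.det)
    (B : Matrix (Fin g) (Fin n₁) ℝ) (D : Matrix (Fin g) (Fin n₂) ℝ)
    (M : Matrix (Fin n₁ ⊕ (Fin g ⊕ (Fin g ⊕ Fin n₂)))
      (Fin n₁ ⊕ (Fin g ⊕ (Fin g ⊕ Fin n₂))) ℝ)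
    (hMdef : M = Matrix.fromBlocks A
      (Matrix.fromCols Bᵀ (Matrix.fromCols 0 0))
      (Matrix.fromRows B (Matrix.fromRows 0 0))
      (Matrix.fromBlocks (B * A⁻¹ * Bᵀ)
        (Matrix.fromCols (-1) 0)
        (Matrix.fromRows (-1) 0)
        (Matrix.fromBlocks (D * C⁻¹ * Dᵀ) D Dᵀ C))) :
    M.det = (-1) ^ g * A.det * C.det := by
  haveI : Invertible A := A.invertibleOfIsUnitDet hAinv
  haveI : Invertible C := C.invertibleOfIsUnitDet hCinv
  have hiA : ⅟A = A⁻¹ := invOf_eq_nonsing_inv A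
  have hiC : ⅟C = C⁻¹ := invOf_eq_nonsing_inv C
  -- Step 1: Schur complement in A
  rw [hMdef, det_fromBlocks₁₁, hiA]
  -- simplify the Schur complement
  have hS : (Matrix.fromBlocks (B * A⁻¹ * Bᵀ)
        (Matrix.fromCols (-1) 0) (Matrix.fromRows (-1) 0)
        (Matrix.fromBlocks (D * C⁻¹ * Dᵀ) D Dᵀ C))
      - Matrix.fromRows B (Matrix.fromRows 0 0) * A⁻¹ * Matrix.fromCols Bᵀ (Matrix.fromCols 0 0)
      = Matrix.fromBlocks 0
        (Matrix.fromCols (-1) 0) (Matrix.fromRows (-1) 0)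
        (Matrix.fromBlocks (D * C⁻¹ * Dᵀ) D Dᵀ C) := by
    rw [Matrix.fromRows_mul, Matrix.fromRows_mul_fromCols]
    ext (i | (i | i)) (j | (j | j)) <;>
      simp [Matrix.fromBlocks, Matrix.fromCols, Matrix.mul_apply, Matrix.fromRows_apply_inl, Matrix.fromRows_apply_inr]
  rw [hS]
  -- Step 2: reindex by sum associativity
  set S := Matrix.fromBlocks (0 : Matrix (Fin g) (Fin g) ℝ)
      (Matrix.fromCols (-1) 0) (Matrix.fromRows (-1) 0)
      (Matrix.fromBlocks (D * C⁻¹ * Dᵀ) D Dᵀ C) with hSdef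
  have hre : S.det = (S.submatrix (Equiv.sumAssoc (Fin g) (Fin g) (Fin n₂))
      (Equiv.sumAssoc (Fin g) (Fin g) (Fin n₂))).det := by
    rw [Matrix.det_submatrix_equiv_self]
  have hsub : S.submatrix (Equiv.sumAssoc (Fin g) (Fin g) (Fin n₂))
      (Equiv.sumAssoc (Fin g) (Fin g) (Fin n₂))
      = Matrix.fromBlocks
          (Matrix.fromBlocks 0 (-1) (-1) (D * C⁻¹ * Dᵀ))
          (Matrix.fromRows 0 D) (Matrix.fromCols 0 Dᵀ) C := by
    ext ((i | i) | i) ((j | j) | j) <;>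
      simp [hSdef, Matrix.fromBlocks, Matrix.fromCols, Equiv.sumAssoc, Matrix.fromRows_apply_inl, Matrix.fromRows_apply_inr]
  rw [hre, hsub, det_fromBlocks₂₂, hiC]
  -- Step 3: simplify the second Schur complement
  have h2 : Matrix.fromBlocks (0 : Matrix (Fin g) (Fin g) ℝ) (-1) (-1) (D * C⁻¹ * Dᵀ)
      - Matrix.fromRows 0 D * C⁻¹ * Matrix.fromCols 0 Dᵀ
      = Matrix.fromBlocks 0 (-1) (-1) 0 := by
    rw [Matrix.fromRows_mul, Matrix.fromRows_mul_fromCols]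
    ext (i | i) (j | j) <;>
      simp [Matrix.fromBlocks, Matrix.mul_apply]
  rw [h2, det_antidiag_neg_one]
  ring
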